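/- Fix d ≥ 2, n ≥ 1 and δ ∈ [0,1]. For every unit vector ψ ∈ ℂ^d, with ρ_ψ := (1−δ)|ψ⟩⟨ψ| + (δ/d)·I_d and Λ := Diag(λ₀, δ/d, …, δ/d) where λ₀ := 1 − (d−1)δ/d, one has ⟨ψ| tr_{2…n}[Π_n ρ_ψ^{⊗n} Π_n] |ψ⟩ = ⟨e₀| tr_{2…n}[Π_n Λ^{⊗n} Π_n] |e₀⟩; i.e., the fidelity achieved by the symmetric-projection protocol under depolarizing noise is the same for every input pure state. -/

import Mathlib

open Matrix

/-- Permutation matrix on `(ℂ^d)^{⊗n}` permuting tensor factors. -/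
noncomputable def permMat (n d : ℕ) (σ : Equiv.Perm (Fin n)) :
    Matrix (Fin n → Fin d) (Fin n → Fin d) ℂ :=
  Matrix.of fun v w => if v = w ∘ σ then 1 else 0

/-- Projector onto the symmetric subspace of `(ℂ^d)^{⊗n}`. -/
noncomputable def symProj (n d : ℕ) :
    Matrix (Fin n → Fin d) (Fin n → Fin d) ℂ :=
  ((n.factorial : ℂ)⁻¹) • ∑ σ : Equiv.Perm (Fin n), permMat n d σ

/-- `n`-fold tensor (Kronecker) power of a `d×d` matrix. -/
noncomputable def tpow {d : ℕ} (A : Matrix (Fin d) (Fin d) ℂ) (n : ℕ) :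
    Matrix (Fin n → Fin d) (Fin n → Fin d) ℂ :=
  Matrix.of fun v w => ∏ i, A (v i) (w i)

/-- Partial trace over all tensor factors except the first. -/
noncomputable def ptrRest {n d : ℕ}
    (M : Matrix (Fin (n + 1) → Fin d) (Fin (n + 1) → Fin d) ℂ) :
    Matrix (Fin d) (Fin d) ℂ :=
  Matrix.of fun i j => ∑ t : Fin n → Fin d, M (Fin.cons i t) (Fin.cons j t)

lemma tpow_mul {d n : ℕ} (A B : Matrix (Fin d) (Fin d) ℂ) :
    tpow (A * B) n = tpow A n * tpow B n := by
  ext v w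
  simp only [tpow, Matrix.mul_apply, Matrix.of_apply]
  rw [Finset.prod_univ_sum]
  rw [Fintype.piFinset_univ]
  exact Finset.sum_congr rfl fun t _ => Finset.prod_mul_distrib

lemma permMat_comm {n d : ℕ} (σ : Equiv.Perm (Fin n)) (A : Matrix (Fin d) (Fin d) ℂ) :
    permMat n d σ * tpow A n = tpow A n * permMat n d σ := by
  ext v w
  simp only [Matrix.mul_apply, permMat, tpow, Matrix.of_apply, ite_mul, mul_ite,
    one_mul, mul_one, zero_mul, mul_zero]
  rw [Finset.sum_eq_single (v ∘ σ.symm), Finset.sum_eq_single (w ∘ σ)]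
  · rw [if_pos rfl, if_pos (by ext i; simp)]
    exact (Equiv.prod_comp σ fun i => A (v (σ.symm i)) (w i)).symm.trans
      (Finset.prod_congr rfl fun i _ => by simp)
  · intro b _ hb
    rw [if_neg (fun h => hb (by rw [h]))]
  · simp
  · intro b _ hb
    rw [if_neg (fun h => hb (funext fun i => by rw [h]; simp))]
  · simp

lemma symProj_comm {n d : ℕ} (A : Matrix (Fin d) (Fin d) ℂ) :
    symProj n d * tpow A n = tpow A n * symProj n d := by
  simp only [symProj, Matrix.smul_mul, Matrix.mul_smul, Matrix.sum_mul, Matrix.mul_sum]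
  congr 1
  exact Finset.sum_congr rfl fun σ _ => permMat_comm σ A

lemma ptrRest_conj {d m : ℕ} (U : Matrix (Fin d) (Fin d) ℂ) (hU : Uᴴ * U = 1)
    (M : Matrix (Fin (m + 1) → Fin d) (Fin (m + 1) → Fin d) ℂ) :
    ptrRest (tpow U (m + 1) * M * tpow Uᴴ (m + 1)) = U * ptrRest M * Uᴴ := by
  have key : ∀ a b : Fin d, ∑ s, U s a * (starRingEnd ℂ) (U s b)
      = if a = b then 1 else 0 := by
    intro a b
    have h1 := congrFun (congrFun hU a) b
    simp only [Matrix.mul_apply, Matrix.conjTranspose_apply, Matrix.one_apply] at h1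
    have := congrArg (starRingEnd ℂ) h1
    simpa [Finset.mul_sum, mul_comm, apply_ite] using this
  have tcollapse : ∀ a' b' : Fin m → Fin d,
      ∑ t : Fin m → Fin d, ∏ k, (U (t k) (a' k) * (starRingEnd ℂ) (U (t k) (b' k)))
      = if a' = b' then 1 else 0 := by
    intro a' b'
    rw [show (∑ t : Fin m → Fin d, ∏ k, (U (t k) (a' k) * (starRingEnd ℂ) (U (t k) (b' k))))
        = ∏ k, ∑ s, (U s (a' k) * (starRingEnd ℂ) (U s (b' k))) from by
      rw [Finset.prod_univ_sum (fun _ : Fin m => (Finset.univ : Finset (Fin d)))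
        (fun k s => U s (a' k) * (starRingEnd ℂ) (U s (b' k))), Fintype.piFinset_univ]]
    simp only [key]
    by_cases h : a' = b'
    · subst h; simp
    · rw [if_neg h]
      obtain ⟨k, hk⟩ := Function.ne_iff.mp h
      exact Finset.prod_eq_zero (Finset.mem_univ k) (by simp [hk])
  ext i j
  simp only [ptrRest, Matrix.of_apply, Matrix.mul_apply]
  -- expand the products over Fin (m+1) via cons on both multiplication indices
  have lhs : ∀ t : Fin m → Fin d,
      (∑ b, (∑ a, tpow U (m+1) (Fin.cons i t) a * M a b) * tpow Uᴴ (m+1) b (Fin.cons j t))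
      = ∑ b0, ∑ b' : Fin m → Fin d, ∑ a0, ∑ a' : Fin m → Fin d,
          (U i a0 * (starRingEnd ℂ) (U j b0) * M (Fin.cons a0 a') (Fin.cons b0 b')) *
          ∏ k, (U (t k) (a' k) * (starRingEnd ℂ) (U (t k) (b' k))) := by
    intro t
    rw [← (Fin.consEquiv (fun _ : Fin (m+1) => Fin d)).sum_comp
      (fun b => (∑ a, tpow U (m+1) (Fin.cons i t) a * M a b) * tpow Uᴴ (m+1) b (Fin.cons j t))]
    rw [Fintype.sum_prod_type]
    refine Finset.sum_congr rfl fun b0 _ => Finset.sum_congr rfl fun b' _ => ?_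
    rw [← (Fin.consEquiv (fun _ : Fin (m+1) => Fin d)).sum_comp
      (fun a => tpow U (m+1) (Fin.cons i t) a * M a (Fin.consEquiv _ (b0, b')))]
    rw [Fintype.sum_prod_type, Finset.sum_mul]
    refine Finset.sum_congr rfl fun a0 _ => ?_
    rw [Finset.sum_mul]
    refine Finset.sum_congr rfl fun a' _ => ?_
    have e1 : tpow U (m+1) (Fin.cons i t) (Fin.consEquiv _ (a0, a'))
        = U i a0 * ∏ k, U (t k) (a' k) := by
      simp [tpow, Fin.consEquiv, Fin.prod_univ_succ]
    have e2 : tpow Uᴴ (m+1) (Fin.consEquiv _ (b0, b')) (Fin.cons j t)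
        = (starRingEnd ℂ) (U j b0) * ∏ k, (starRingEnd ℂ) (U (t k) (b' k)) := by
      simp [tpow, Fin.consEquiv, Fin.prod_univ_succ, Matrix.conjTranspose_apply]
    show tpow U (m+1) (Fin.cons i t) (Fin.consEquiv _ (a0, a')) *
        M (Fin.consEquiv _ (a0, a')) (Fin.consEquiv _ (b0, b')) *
        tpow Uᴴ (m+1) (Fin.consEquiv _ (b0, b')) (Fin.cons j t) = _
    rw [e1, e2]
    have hc : (Fin.consEquiv (fun _ : Fin (m+1) => Fin d)) (a0, a') = Fin.cons a0 a' := rfl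
    have hc2 : (Fin.consEquiv (fun _ : Fin (m+1) => Fin d)) (b0, b') = Fin.cons b0 b' := rfl
    rw [hc, hc2, Finset.prod_mul_distrib]
    ring
  simp only [lhs]
  calc ∑ t : Fin m → Fin d, ∑ b0, ∑ b' : Fin m → Fin d, ∑ a0, ∑ a' : Fin m → Fin d,
          U i a0 * (starRingEnd ℂ) (U j b0) * M (Fin.cons a0 a') (Fin.cons b0 b') *
          ∏ k, (U (t k) (a' k) * (starRingEnd ℂ) (U (t k) (b' k)))
      = ∑ b0, ∑ b' : Fin m → Fin d, ∑ a0, ∑ a' : Fin m → Fin d, ∑ t : Fin m → Fin d,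
          U i a0 * (starRingEnd ℂ) (U j b0) * M (Fin.cons a0 a') (Fin.cons b0 b') *
          ∏ k, (U (t k) (a' k) * (starRingEnd ℂ) (U (t k) (b' k))) := by
        rw [Finset.sum_comm]
        refine Finset.sum_congr rfl fun b0 _ => ?_
        rw [Finset.sum_comm]
        refine Finset.sum_congr rfl fun b' _ => ?_
        rw [Finset.sum_comm]
        exact Finset.sum_congr rfl fun a0 _ => Finset.sum_comm
    _ = ∑ b0, ∑ b' : Fin m → Fin d, ∑ a0,
          U i a0 * (starRingEnd ℂ) (U j b0) * M (Fin.cons a0 b') (Fin.cons b0 b') := by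
        refine Finset.sum_congr rfl fun b0 _ => Finset.sum_congr rfl fun b' _ =>
          Finset.sum_congr rfl fun a0 _ => ?_
        have : ∀ a' : Fin m → Fin d, (∑ t : Fin m → Fin d,
            U i a0 * (starRingEnd ℂ) (U j b0) * M (Fin.cons a0 a') (Fin.cons b0 a') *
            0) = 0 := by simp
        rw [show (∑ a' : Fin m → Fin d, ∑ t : Fin m → Fin d,
            U i a0 * (starRingEnd ℂ) (U j b0) * M (Fin.cons a0 a') (Fin.cons b0 b') *
            ∏ k, (U (t k) (a' k) * (starRingEnd ℂ) (U (t k) (b' k))))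
          = ∑ a' : Fin m → Fin d,
            U i a0 * (starRingEnd ℂ) (U j b0) * M (Fin.cons a0 a') (Fin.cons b0 b') *
            (if a' = b' then 1 else 0) from
          Finset.sum_congr rfl fun a' _ => by rw [← Finset.mul_sum, tcollapse]]
        simp only [mul_ite, mul_one, mul_zero]
        rw [Finset.sum_ite_eq' Finset.univ b']
        simp
    _ = ∑ b0, (∑ a0, U i a0 * ∑ t : Fin m → Fin d,
          M (Fin.cons a0 t) (Fin.cons b0 t)) * Uᴴ b0 j := by
        refine Finset.sum_congr rfl fun b0 _ => ?_
        rw [Finset.sum_comm, Finset.sum_mul]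
        refine Finset.sum_congr rfl fun a0 _ => ?_
        rw [Finset.mul_sum, Finset.sum_mul]
        refine Finset.sum_congr rfl fun b' _ => ?_
        simp [Matrix.conjTranspose_apply]
        ring

lemma exists_unitary {d : ℕ} (z0 : Fin d) (ψ : Fin d → ℂ) (hψ : star ψ ⬝ᵥ ψ = 1) :
    ∃ U : Matrix (Fin d) (Fin d) ℂ, Uᴴ * U = 1 ∧ ∀ i, U i z0 = ψ i := by
  let ψE : EuclideanSpace ℂ (Fin d) := WithLp.toLp 2 ψ
  have hψ' : (inner ℂ ψE ψE : ℂ) = 1 := by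
    rw [PiLp.inner_apply]
    rw [← hψ]
    simp [ψE, dotProduct, mul_comm]
    simp [RCLike.mul_conj]
  have hcard : Module.finrank ℂ (EuclideanSpace ℂ (Fin d)) = Fintype.card (Fin d) := by
    simp
  have horth : Orthonormal ℂ
      (({z0} : Set (Fin d)).restrict (fun _ : Fin d => ψE)) := by
    rw [orthonormal_iff_ite]
    rintro ⟨i, hi⟩ ⟨j, hj⟩
    simp only [Set.mem_singleton_iff] at hi hj
    subst hi; subst hj
    rw [if_pos rfl]
    exact hψ'
  obtain ⟨b, hb⟩ := horth.exists_orthonormalBasis_extension_of_card_eq hcard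
  refine ⟨Matrix.of fun i q => b q i, ?_, ?_⟩
  · ext q r
    have := (orthonormal_iff_ite.mp b.orthonormal) q r
    rw [PiLp.inner_apply] at this
    simp only [Matrix.mul_apply, Matrix.conjTranspose_apply, Matrix.of_apply,
      Matrix.one_apply]
    simpa [mul_comm] using this
  · intro i
    have h := hb z0 rfl
    exact congrFun (congrArg (fun x : EuclideanSpace ℂ (Fin d) => (x : Fin d → ℂ)) h) i

lemma decomp {d : ℕ} (hd : 2 ≤ d) (z0 : Fin d) (δ : ℝ)
    (U : Matrix (Fin d) (Fin d) ℂ) (hU : Uᴴ * U = 1) (ψ : Fin d → ℂ)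
    (hcol : ∀ i, U i z0 = ψ i) :
    U * Matrix.diagonal (fun i : Fin d =>
        if i = z0 then ((1 - ((d : ℝ) - 1) * δ / d : ℝ) : ℂ) else ((δ / d : ℝ) : ℂ)) * Uᴴ
    = ((1 - δ : ℝ) : ℂ) • Matrix.vecMulVec ψ (star ψ)
      + ((δ / d : ℝ) : ℂ) • (1 : Matrix (Fin d) (Fin d) ℂ) := by
  have hd0 : (d : ℝ) ≠ 0 := by positivity
  have hUU : U * Uᴴ = 1 := mul_eq_one_comm.mp hU
  have hdiag : Matrix.diagonal (fun i : Fin d =>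
        if i = z0 then ((1 - ((d : ℝ) - 1) * δ / d : ℝ) : ℂ) else ((δ / d : ℝ) : ℂ))
      = ((1 - δ : ℝ) : ℂ) • Matrix.vecMulVec (Pi.single z0 1) (star (Pi.single z0 1))
        + ((δ / d : ℝ) : ℂ) • (1 : Matrix (Fin d) (Fin d) ℂ) := by
    ext i j
    have harith : (1 - ((d : ℝ) - 1) * δ / d : ℝ) = (1 - δ) + δ / d := by
      field_simp; ring
    simp only [Matrix.diagonal_apply, Matrix.add_apply, Matrix.smul_apply,
      Matrix.vecMulVec_apply, Pi.star_apply, Pi.single_apply, Matrix.one_apply,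
      smul_eq_mul]
    by_cases hij : i = j
    · subst hij
      by_cases hi : i = z0 <;> simp [hi, harith] <;> push_cast <;> ring
    · have hnot : ¬(i = z0 ∧ j = z0) := fun h => hij (h.1.trans h.2.symm)
      by_cases hi : i = z0 <;> by_cases hj : j = z0 <;> simp_all
  rw [hdiag, Matrix.mul_add, Matrix.add_mul, Matrix.mul_smul, Matrix.mul_smul,
    Matrix.smul_mul, Matrix.smul_mul, Matrix.mul_one, hUU]
  congr 1
  congr 1
  ext i j
  simp only [Matrix.mul_apply, Matrix.vecMulVec_apply, Pi.star_apply, Pi.single_apply,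
    Matrix.conjTranspose_apply]
  rw [show (∑ x, (∑ x_1, U i x_1 * ((if x_1 = z0 then (1:ℂ) else 0) *
        star (if x = z0 then (1:ℂ) else 0))) * star (U j x))
      = ∑ x, (if x = z0 then U i z0 * star (U j x) else 0) from
    Finset.sum_congr rfl fun x _ => by
      by_cases hx : x = z0 <;>
        simp [hx, Finset.sum_ite_eq', mul_ite, mul_zero, mul_one]]
  rw [Finset.sum_ite_eq' Finset.univ z0]
  simp [hcol]

/-- covariance of the fidelity under depolarizing noise. For
`d ≥ 2`, `n = m+1 ≥ 1`, `δ ∈ [0,1]` and every unit vector `ψ ∈ ℂ^d`, with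
`ρ_ψ = (1−δ)|ψ⟩⟨ψ| + (δ/d)I` and `Λ = Diag(λ₀, δ/d, …, δ/d)`, `λ₀ = 1 − (d−1)δ/d`,
one has `⟨ψ| tr_{2…n}[Π_n ρ_ψ^{⊗n} Π_n] |ψ⟩ = ⟨e₀| tr_{2…n}[Π_n Λ^{⊗n} Π_n] |e₀⟩`. -/
theorem stmt19 (d m : ℕ) (hd : 2 ≤ d) (δ : ℝ) (hδ : δ ∈ Set.Icc (0 : ℝ) 1)
    (ψ : Fin d → ℂ) (hψ : star ψ ⬝ᵥ ψ = 1) :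
    star ψ ⬝ᵥ
      (ptrRest (symProj (m + 1) d *
          tpow (((1 - δ : ℝ) : ℂ) • Matrix.vecMulVec ψ (star ψ)
            + ((δ / d : ℝ) : ℂ) • (1 : Matrix (Fin d) (Fin d) ℂ)) (m + 1) *
          symProj (m + 1) d) *ᵥ ψ)
      = ptrRest (symProj (m + 1) d *
          tpow (Matrix.diagonal (fun i : Fin d =>
            if i = (⟨0, by omega⟩ : Fin d) then ((1 - ((d : ℝ) - 1) * δ / d : ℝ) : ℂ)
            else ((δ / d : ℝ) : ℂ))) (m + 1) *
          symProj (m + 1) d)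
        (⟨0, by omega⟩ : Fin d) (⟨0, by omega⟩ : Fin d) := by
  set z0 : Fin d := ⟨0, by omega⟩ with hz0
  obtain ⟨U, hU, hcol⟩ := exists_unitary z0 ψ hψ
  set Λ : Matrix (Fin d) (Fin d) ℂ := Matrix.diagonal (fun i : Fin d =>
      if i = z0 then ((1 - ((d : ℝ) - 1) * δ / d : ℝ) : ℂ) else ((δ / d : ℝ) : ℂ)) with hΛ
  have hρ : ((1 - δ : ℝ) : ℂ) • Matrix.vecMulVec ψ (star ψ)
      + ((δ / d : ℝ) : ℂ) • (1 : Matrix (Fin d) (Fin d) ℂ) = U * Λ * Uᴴ :=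
    (decomp hd z0 δ U hU ψ hcol).symm
  rw [hρ, tpow_mul, tpow_mul]
  have hcomm : symProj (m + 1) d * (tpow U (m + 1) * tpow Λ (m + 1) * tpow Uᴴ (m + 1)) *
      symProj (m + 1) d
      = tpow U (m + 1) * (symProj (m + 1) d * tpow Λ (m + 1) * symProj (m + 1) d) *
        tpow Uᴴ (m + 1) := by
    calc symProj (m + 1) d * (tpow U (m + 1) * tpow Λ (m + 1) * tpow Uᴴ (m + 1)) *
          symProj (m + 1) d
        = (symProj (m + 1) d * tpow U (m + 1)) * tpow Λ (m + 1) *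
          (tpow Uᴴ (m + 1) * symProj (m + 1) d) := by simp only [mul_assoc]
      _ = (tpow U (m + 1) * symProj (m + 1) d) * tpow Λ (m + 1) *
          (symProj (m + 1) d * tpow Uᴴ (m + 1)) := by
          rw [symProj_comm, symProj_comm]
      _ = tpow U (m + 1) * (symProj (m + 1) d * tpow Λ (m + 1) * symProj (m + 1) d) *
          tpow Uᴴ (m + 1) := by simp only [mul_assoc]
  rw [hcomm, ptrRest_conj U hU]
  set X := ptrRest (symProj (m + 1) d * tpow Λ (m + 1) * symProj (m + 1) d) with hX
  have hψv : ψ = U *ᵥ Pi.single z0 1 := by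
    funext i
    simp only [Matrix.mulVec, dotProduct, Pi.single_apply, mul_ite, mul_one,
      mul_zero]
    rw [Finset.sum_ite_eq' Finset.univ z0]
    simp [hcol]
  have he : Uᴴ *ᵥ ψ = Pi.single z0 1 := by
    rw [hψv, Matrix.mulVec_mulVec, hU, Matrix.one_mulVec]
  have hstar : star ψ ᵥ* U = Pi.single z0 1 := by
    have h1 : star (Uᴴ *ᵥ ψ) = star ψ ᵥ* U := by
      rw [Matrix.star_mulVec, Matrix.conjTranspose_conjTranspose]
    rw [← h1, he]
    funext i
    simp [Pi.single_apply, apply_ite]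
  calc star ψ ⬝ᵥ ((U * X * Uᴴ) *ᵥ ψ)
      = star ψ ⬝ᵥ (U *ᵥ (X *ᵥ (Uᴴ *ᵥ ψ))) := by
        rw [Matrix.mulVec_mulVec, Matrix.mulVec_mulVec]
    _ = (star ψ ᵥ* U) ⬝ᵥ (X *ᵥ (Uᴴ *ᵥ ψ)) := Matrix.dotProduct_mulVec _ _ _
    _ = (Pi.single z0 1 : Fin d → ℂ) ⬝ᵥ (X *ᵥ (Pi.single z0 1 : Fin d → ℂ)) := by
        rw [hstar, he]
    _ = X z0 z0 := by
        simp only [dotProduct, Matrix.mulVec, Pi.single_apply, mul_ite, mul_one,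
          mul_zero, ite_mul, one_mul, zero_mul]
        rw [Finset.sum_ite_eq' Finset.univ z0]
        simp only [Finset.mem_univ, if_true]
        rw [Finset.sum_ite_eq' Finset.univ z0]
        simp
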